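/- Let φ(z) = max{ Σ_{k=2}^∞ α_k log(|z₁|+|z₂-1/k|^{β_k}), λ log|z₃| } on a neighborhood of 0 in ℂ³, with α_k = 2^{-k!}, β_k = 3·2^{k!}, λ > 6. Then for every k ≥ 2 with the point p_k = (0, 1/k, 0) in the domain, and every α > 1, the function 1/(|z₁|²(-log|z₁|)^α) · e^{-φ} is not Lebesgue-integrable on any neighborhood of p_k. -/

import Mathlib

open MeasureTheory Complex Real Filter

open scoped ENNReal NNReal

noncomputable section

/-- `log` with values in `EReal`, with `log x = -∞` for `x ≤ 0`. -/
def eLog (x : ℝ) : EReal := if x ≤ 0 then ⊥ else ((Real.log x : ℝ) : EReal)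

/-- `α_k = 2^{-k!}`. -/
def al (k : ℕ) : ℝ := ((2 : ℝ) ^ (Nat.factorial k))⁻¹

/-- `β_k = 3 · 2^{k!}`. -/
def be (k : ℕ) : ℝ := 3 * (2 : ℝ) ^ (Nat.factorial k)

/-- `φ(z) = max{Σ_{k≥2} α_k log(|z₁|+|z₂-1/k|^{β_k}), λ log|z₃|}` on `ℂ³`. -/
def phi3 (lam : ℝ) (z : Fin 3 → ℂ) : EReal :=
  max (∑' k : ℕ, ((al (k + 2) : ℝ) : EReal) *
      eLog (‖z 0‖ + ‖z 1 - 1 / ((k : ℂ) + 2)‖ ^ be (k + 2)))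
    (((lam : ℝ) : EReal) * eLog (‖z 2‖))

/-- The point `p_k = (0, 1/k, 0) ∈ ℂ³`. -/
def pk (k : ℕ) : Fin 3 → ℂ := ![0, 1 / (k : ℂ), 0]

private def erealCoeHom : ℝ →+ EReal where
  toFun := (↑)
  map_zero' := rfl
  map_add' := EReal.coe_add

lemma ereal_coe_tsum {f : ℕ → ℝ} (hf : Summable f) :
    (∑' n, ((f n : ℝ) : EReal)) = ((∑' n, f n : ℝ) : EReal) := by
  obtain ⟨s, hs⟩ := hf
  have h2 : HasSum (fun n => ((f n : ℝ) : EReal)) ((s : ℝ) : EReal) := by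
    have := ((continuous_coe_real_ereal.tendsto s).comp hs)
    have heq : ((fun x : ℝ => (x : EReal)) ∘ fun t : Finset ℕ => ∑ i ∈ t, f i)
        = fun t : Finset ℕ => ∑ i ∈ t, ((f i : ℝ) : EReal) := by
      funext t
      exact map_sum erealCoeHom f t
    rwa [heq] at this
  rw [h2.tsum_eq, hs.tsum_eq]

lemma al_pos (k : ℕ) : 0 < al k := by unfold al; positivity

lemma be_one_le (k : ℕ) : 1 ≤ be k := by
  unfold be
  nlinarith [one_le_pow₀ (M₀ := ℝ) (a := 2) (n := Nat.factorial k) one_le_two]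

lemma al_mul_be (k : ℕ) : al k * be k = 3 := by
  unfold al be
  have : (0:ℝ) < 2 ^ (Nat.factorial k) := by positivity
  field_simp

lemma al_le (j : ℕ) : al (j + 2) ≤ (1/2 : ℝ) ^ j := by
  unfold al
  rw [one_div, inv_pow]
  apply inv_anti₀ (by positivity)
  exact pow_le_pow_right₀ one_le_two (le_trans (Nat.le_add_right j 2) (Nat.self_le_factorial _))

lemma pow34 {x b : ℝ} (hx0 : 0 ≤ x) (hx : x ≤ 3/4) (hb : 1 ≤ b) : x ^ b ≤ 3/4 := by
  rcases eq_or_lt_of_le hx0 with h | h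
  · rw [← h, Real.zero_rpow (by linarith)]; norm_num
  · calc x ^ b ≤ (3/4 : ℝ) ^ b := Real.rpow_le_rpow hx0 hx (by linarith)
      _ ≤ (3/4 : ℝ) ^ (1:ℝ) := Real.rpow_le_rpow_of_exponent_ge (by norm_num) (by norm_num) hb
      _ = 3/4 := by rw [Real.rpow_one]

lemma abs_sub_inv_le {k : ℕ} (hk : 2 ≤ k) (j : ℕ) {w : ℂ}
    (h : ‖w - 1/(k:ℂ)‖ ≤ 1/4) : ‖w - 1/((j:ℂ)+2)‖ ≤ 3/4 := by
  have hk0 : (2:ℝ) ≤ (k:ℝ) := by exact_mod_cast hk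
  have hj : (0:ℝ) < (j:ℝ)+2 := by positivity
  have h1 : ‖1/(k:ℂ) - 1/((j:ℂ)+2)‖ ≤ 1/2 := by
    have e1 : (1/(k:ℂ) - 1/((j:ℂ)+2)) = (((1/(k:ℝ) - 1/((j:ℝ)+2)) : ℝ) : ℂ) := by
      push_cast; ring
    rw [e1, Complex.norm_real, Real.norm_eq_abs]
    have h1k : 1/(k:ℝ) ≤ 1/2 := by
      apply one_div_le_one_div_of_le <;> linarith
    have h1j : 1/((j:ℝ)+2) ≤ 1/2 := by
      apply one_div_le_one_div_of_le <;> linarith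
    have h1k' : 0 ≤ 1/(k:ℝ) := by positivity
    have h1j' : 0 ≤ 1/((j:ℝ)+2) := by positivity
    rw [abs_sub_le_iff]
    constructor <;> linarith
  calc ‖w - 1/((j:ℂ)+2)‖
      = ‖(w - 1/(k:ℂ)) + (1/(k:ℂ) - 1/((j:ℂ)+2))‖ := by ring_nf
    _ ≤ ‖w - 1/(k:ℂ)‖ + ‖1/(k:ℂ) - 1/((j:ℂ)+2)‖ :=
        norm_add_le _ _
    _ ≤ 3/4 := by linarith

lemma phi3_le (lam : ℝ) (hlam : 6 < lam) (k : ℕ) (hk : 2 ≤ k) (z : Fin 3 → ℂ)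
    (h1pos : 0 < ‖z 0‖) (h1small : ‖z 0‖ ≤ 1/8)
    (h2 : ‖z 1 - 1/(k:ℂ)‖ ≤ 1/4)
    (h2k : ‖z 1 - 1/(k:ℂ)‖ ^ (be k) ≤ ‖z 0‖)
    (h3 : ‖z 2‖ ≤ (2 * ‖z 0‖) ^ (al k / lam)) :
    phi3 lam z ≤ ((al k * Real.log (2 * ‖z 0‖) : ℝ) : EReal) := by
  set x := ‖z 0‖ with hx
  have hlam0 : (0:ℝ) < lam := by linarith
  have hx1 : x < 1 := lt_of_le_of_lt h1small (by norm_num)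
  have hlogx : Real.log x < 0 := Real.log_neg h1pos hx1
  have h2x : (0:ℝ) < 2 * x := by linarith
  apply max_le
  · -- the sum branch
    set t : ℕ → ℝ := fun j =>
      al (j+2) * Real.log (x + ‖z 1 - 1/((j:ℂ)+2)‖ ^ be (j+2)) with ht
    have hargpos : ∀ j : ℕ, 0 < x + ‖z 1 - 1/((j:ℂ)+2)‖ ^ be (j+2) := by
      intro j
      have := Real.rpow_nonneg (norm_nonneg (z 1 - 1/((j:ℂ)+2))) (be (j+2))
      linarith
  -- terms coincide with coercions of t
    have hterm : ∀ j : ℕ, ((al (j + 2) : ℝ) : EReal) *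
        eLog (x + ‖z 1 - 1 / ((j : ℂ) + 2)‖ ^ be (j + 2))
        = ((t j : ℝ) : EReal) := by
      intro j
      rw [eLog, if_neg (not_le.2 (hargpos j)), ← EReal.coe_mul]
    have hargle : ∀ j : ℕ, x + ‖z 1 - 1/((j:ℂ)+2)‖ ^ be (j+2) ≤ 1 := by
      intro j
      have h34 : ‖z 1 - 1/((j:ℂ)+2)‖ ^ be (j+2) ≤ 3/4 :=
        pow34 (norm_nonneg _) (abs_sub_inv_le hk j h2) (be_one_le _)
      linarith
    have htle : ∀ j, t j ≤ 0 := by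
      intro j
      exact mul_nonpos_of_nonneg_of_nonpos (al_pos _).le
        (Real.log_nonpos (hargpos j).le (hargle j))
    have habs : ∀ j, |t j| ≤ (1/2:ℝ)^j * (-Real.log x) := by
      intro j
      rw [abs_le]
      constructor
      · have hlog1 : Real.log x ≤ Real.log (x + ‖z 1 - 1/((j:ℂ)+2)‖ ^ be (j+2)) :=
          Real.log_le_log h1pos (by
            have := Real.rpow_nonneg (norm_nonneg (z 1 - 1/((j:ℂ)+2))) (be (j+2))
            linarith)
        have s1 : al (j+2) * Real.log x ≤ t j :=
          mul_le_mul_of_nonneg_left hlog1 (al_pos _).le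
        have s2 : (1/2:ℝ)^j * Real.log x ≤ al (j+2) * Real.log x :=
          mul_le_mul_of_nonpos_right (al_le j) hlogx.le
        have : -((1/2:ℝ)^j * (-Real.log x)) = (1/2:ℝ)^j * Real.log x := by ring
        linarith
      · have : (0:ℝ) ≤ (1/2:ℝ)^j * (-Real.log x) := by
          apply mul_nonneg (by positivity); linarith
        linarith [htle j]
    have hsum : Summable t :=
      Summable.of_abs (Summable.of_nonneg_of_le (fun j => abs_nonneg _) habs
        ((summable_geometric_of_lt_one (by norm_num) (by norm_num)).mul_right _))
    have hrw : (∑' j : ℕ, ((al (j + 2) : ℝ) : EReal) *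
        eLog (x + ‖z 1 - 1 / ((j : ℂ) + 2)‖ ^ be (j + 2)))
        = ((∑' j, t j : ℝ) : EReal) := by
      rw [tsum_congr hterm, ereal_coe_tsum hsum]
    rw [hrw, EReal.coe_le_coe_iff]
    -- now a real estimate
    have hkn : (k - 2) + 2 = k := Nat.sub_add_cancel hk
    have hkc : ((k - 2 : ℕ) : ℂ) + 2 = (k : ℂ) := by
      have : ((k - 2 : ℕ) : ℂ) = (k : ℂ) - 2 := by
        rw [Nat.cast_sub hk]; norm_num
      rw [this]; ring
    have hmain : t (k - 2) ≤ al k * Real.log (2 * x) := by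
      have : t (k - 2) = al k * Real.log (x + ‖z 1 - 1/(k:ℂ)‖ ^ be k) := by
        rw [ht]; simp only [hkn, hkc]
      rw [this]
      apply mul_le_mul_of_nonneg_left _ (al_pos _).le
      apply Real.log_le_log (by positivity)
      linarith
    have hts : (∑' j, t j) ≤ t (k - 2) := by
      have hle : ∀ j, t j ≤ (fun j => if j = k - 2 then t (k - 2) else 0) j := by
        intro j
        by_cases hj : j = k - 2
        · subst hj; simp
        · simp [hj, htle j]
      have := Summable.tsum_le_tsum hle hsum (hasSum_ite_eq (k-2) (t (k-2))).summable
      rwa [(hasSum_ite_eq (k-2) (t (k-2))).tsum_eq] at this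
    linarith
  · -- the z₃ branch
    rcases eq_or_lt_of_le (norm_nonneg (z 2)) with h0 | h0
    · rw [eLog, if_pos (le_of_eq h0.symm)]
      rw [EReal.coe_mul_bot_of_pos (by exact_mod_cast hlam0)]
      exact bot_le
    · rw [eLog, if_neg (not_le.2 h0), ← EReal.coe_mul, EReal.coe_le_coe_iff]
      have hl1 : Real.log (‖z 2‖) ≤ (al k / lam) * Real.log (2 * x) := by
        have := Real.log_le_log h0 h3
        rwa [Real.log_rpow h2x] at this
      have : lam * Real.log (‖z 2‖) ≤ lam * ((al k / lam) * Real.log (2 * x)) :=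
        mul_le_mul_of_nonneg_left hl1 hlam0.le
      calc lam * Real.log (‖z 2‖)
          ≤ lam * ((al k / lam) * Real.log (2 * x)) := this
        _ = al k * Real.log (2 * x) := by field_simp

/-- exponent gain -/
def gam (k : ℕ) (lam : ℝ) : ℝ := al k - 2 / be k - 2 * al k / lam

/-- the constant in the lower bound -/
def Kc (k : ℕ) (lam α : ℝ) : ℝ :=
  (3/4) * π^3 * (2:ℝ)^(-(al k)) * (2:ℝ)^(-(2/(be k))) *
    (((2*α/(gam k lam))^α)⁻¹) * (2:ℝ)^(-(gam k lam/2))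

lemma be_eq (k : ℕ) : be k = 3 / al k := by
  have h := al_mul_be k
  have ha := al_pos k
  field_simp
  linarith [h]

lemma gam_pos (k : ℕ) {lam : ℝ} (hlam : 6 < lam) : 0 < gam k lam := by
  have ha := al_pos k
  have hlam0 : (0:ℝ) < lam := by linarith
  have : gam k lam = al k * (lam - 6) / (3 * lam) := by
    rw [gam, be_eq k]
    field_simp
    ring
  rw [this]
  have : 0 < al k * (lam - 6) := by nlinarith
  positivity

lemma Kc_pos (k : ℕ) {lam α : ℝ} (hlam : 6 < lam) (hα : 1 < α) : 0 < Kc k lam α := by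
  have hγ := gam_pos k hlam
  have hπ := Real.pi_pos
  have h1 : (0:ℝ) < (2*α/(gam k lam))^α := Real.rpow_pos_of_pos (by positivity) _
  unfold Kc
  positivity

lemma key_est (lam : ℝ) (hlam : 6 < lam) (k : ℕ) (hk : 2 ≤ k) (α : ℝ) (hα : 1 < α)
    (ε : ℝ) (hεpos : 0 < ε) (hε14 : ε ≤ 1/4) (r : ℝ) (hr0 : 0 < r)
    (hr18 : r ≤ 1/8) (hrεb : r / 2 < ε ^ (be k)) (hrεl : r < ε ^ (lam / al k)) :
    ENNReal.ofReal (Kc k lam α * r ^ (-(gam k lam / 2))) ≤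
      ∫⁻ z in Metric.ball (pk k) ε, EReal.exp (-(phi3 lam z)) *
        ENNReal.ofReal (1 / (‖z 0‖ ^ 2 * (-Real.log (‖z 0‖)) ^ α)) := by
  have ha : 0 < al k := al_pos k
  have hb1 : 1 ≤ be k := be_one_le k
  have hb : 0 < be k := lt_of_lt_of_le one_pos hb1
  have hγ : 0 < gam k lam := gam_pos k hlam
  have hα0 : (0:ℝ) < α := lt_trans one_pos hα
  have hlam0 : (0:ℝ) < lam := by linarith
  have hr2 : 0 < r / 2 := by linarith
  have hrne : r ≠ 0 := hr0.ne'
  set a := al k with hadef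
  set b := be k with hbdef
  set γ := gam k lam with hgdef
  set L := -Real.log (r/2) with hLdef
  have hr21 : r/2 < 1 := by linarith
  have hLpos : 0 < L := by rw [hLdef]; linarith [Real.log_neg hr2 hr21]
  have hLα : (0:ℝ) < L ^ α := Real.rpow_pos_of_pos hLpos α
  set T : Fin 3 → Set ℂ := ![Metric.ball 0 r \ Metric.closedBall 0 (r/2),
    Metric.closedBall (1/(k:ℂ)) ((r/2) ^ ((1:ℝ)/b)), Metric.closedBall 0 (r ^ (a/lam))] with hTdef
  have hT0 : T 0 = Metric.ball 0 r \ Metric.closedBall 0 (r/2) := rfl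
  have hT1 : T 1 = Metric.closedBall (1/(k:ℂ)) ((r/2) ^ ((1:ℝ)/b)) := rfl
  have hT2 : T 2 = Metric.closedBall 0 (r ^ (a/lam)) := rfl
  set S := Set.univ.pi T with hSdef
  -- radii bounds
  have hrb1 : (r/2 : ℝ) ^ ((1:ℝ)/b) < ε := by
    have h1 : ((r/2:ℝ)) ^ ((1:ℝ)/b) < (ε ^ b) ^ ((1:ℝ)/b) :=
      Real.rpow_lt_rpow hr2.le hrεb (by positivity)
    have h2 : ((ε ^ b : ℝ)) ^ ((1:ℝ)/b) = ε := by
      rw [← Real.rpow_mul hεpos.le, mul_one_div, div_self hb.ne', Real.rpow_one]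
    rwa [h2] at h1
  have hrb2 : r ^ (a/lam) < ε := by
    have h1 : r ^ (a/lam) < (ε ^ (lam/a)) ^ (a/lam) :=
      Real.rpow_lt_rpow hr0.le hrεl (by positivity)
    have h2 : ((ε ^ (lam/a) : ℝ)) ^ (a/lam) = ε := by
      rw [← Real.rpow_mul hεpos.le, show lam/a * (a/lam) = 1 by field_simp, Real.rpow_one]
    rwa [h2] at h1
  have hrε : r < ε := by
    have h6 : r/2 < ε * (1/4) := by
      have hb2 : (2:ℝ) ≤ b := by
        rw [hbdef, be]
        nlinarith [one_le_pow₀ (M₀ := ℝ) (a := 2) (n := Nat.factorial k) one_le_two]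
      have h5 : ε ^ b ≤ ε * (1/4) := by
        calc ε ^ b ≤ ε ^ (2:ℝ) := Real.rpow_le_rpow_of_exponent_ge hεpos (by linarith) hb2
          _ = ε * ε := by
              rw [show (2:ℝ) = ((2:ℕ):ℝ) by norm_num, Real.rpow_natCast]; ring
          _ ≤ ε * (1/4) := mul_le_mul_of_nonneg_left hε14 hεpos.le
      exact lt_of_lt_of_le hrεb h5
    linarith [h6, hεpos]
  -- subset of the ball
  have hSball : S ⊆ Metric.ball (pk k) ε := by
    intro z hz
    rw [Set.mem_univ_pi] at hz
    have h0 := hz 0; rw [hT0] at h0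
    have h1 := hz 1; rw [hT1] at h1
    have h2 := hz 2; rw [hT2] at h2
    rw [Metric.mem_ball, dist_pi_lt_iff hεpos]
    intro i
    fin_cases i
    · show dist (z 0) (pk k 0) < ε
      rw [show pk k 0 = 0 from rfl]
      exact lt_trans (Metric.mem_ball.1 h0.1) hrε
    · show dist (z 1) (pk k 1) < ε
      rw [show pk k 1 = 1/(k:ℂ) from rfl]
      exact lt_of_le_of_lt (Metric.mem_closedBall.1 h1) hrb1
    · show dist (z 2) (pk k 2) < ε
      rw [show pk k 2 = 0 from rfl]
      exact lt_of_le_of_lt (Metric.mem_closedBall.1 h2) hrb2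
  -- pointwise lower bound on S
  have hpoint : ∀ z ∈ S, ENNReal.ofReal ((2*r)^(-a) * (1/(r^2 * L^α))) ≤
      EReal.exp (-(phi3 lam z)) *
        ENNReal.ofReal (1 / (‖z 0‖ ^ 2 * (-Real.log (‖z 0‖)) ^ α)) := by
    intro z hz
    rw [Set.mem_univ_pi] at hz
    have h0 := hz 0; rw [hT0] at h0
    have h1 := hz 1; rw [hT1] at h1
    have h2 := hz 2; rw [hT2] at h2
    obtain ⟨h0a, h0b⟩ := h0
    rw [Metric.mem_ball, Complex.dist_eq, sub_zero] at h0a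
    rw [Metric.mem_closedBall, Complex.dist_eq, sub_zero] at h0b
    push_neg at h0b
    rw [Metric.mem_closedBall, Complex.dist_eq] at h1
    rw [Metric.mem_closedBall, Complex.dist_eq, sub_zero] at h2
    set x := ‖z 0‖ with hxdef
    have hxr : x < r := h0a
    have hxl : r/2 < x := h0b
    have hxpos : 0 < x := lt_trans hr2 hxl
    have hx18 : x ≤ 1/8 := le_trans hxr.le hr18
    have hx1 : x < 1 := by linarith
    have hlx : 0 < -Real.log x := by linarith [Real.log_neg hxpos hx1]
    have hw14 : ‖z 1 - 1/(k:ℂ)‖ ≤ 1/4 := le_trans h1 (le_trans hrb1.le hε14)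
    have hwk : ‖z 1 - 1/(k:ℂ)‖ ^ b ≤ x := by
      calc ‖z 1 - 1/(k:ℂ)‖ ^ b ≤ ((r/2) ^ ((1:ℝ)/b)) ^ b :=
            Real.rpow_le_rpow (norm_nonneg _) h1 hb.le
        _ = r/2 := by
            rw [← Real.rpow_mul hr2.le, one_div_mul_cancel hb.ne', Real.rpow_one]
        _ ≤ x := hxl.le
    have hz3 : ‖z 2‖ ≤ (2*x) ^ (a/lam) := by
      calc ‖z 2‖ ≤ r ^ (a/lam) := h2
        _ ≤ (2*x) ^ (a/lam) := Real.rpow_le_rpow hr0.le (by linarith) (by positivity)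
    have hφ := phi3_le lam hlam k hk z hxpos hx18 hw14 hwk hz3
    have hexp : ENNReal.ofReal ((2*r)^(-a)) ≤ EReal.exp (-(phi3 lam z)) := by
      have hneg : ((-(a * Real.log (2*x)) : ℝ) : EReal) ≤ -(phi3 lam z) := by
        rw [EReal.coe_neg]
        exact EReal.neg_le_neg_iff.2 hφ
      calc ENNReal.ofReal ((2*r)^(-a)) ≤ ENNReal.ofReal ((2*x)^(-a)) := by
            apply ENNReal.ofReal_le_ofReal
            exact Real.rpow_le_rpow_of_nonpos (by linarith) (by linarith) (by linarith)
        _ = EReal.exp ((-(a * Real.log (2*x)) : ℝ) : EReal) := by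
            rw [EReal.exp_coe]
            congr 1
            rw [Real.rpow_def_of_pos (by linarith : (0:ℝ) < 2*x)]
            ring_nf
        _ ≤ EReal.exp (-(phi3 lam z)) := EReal.exp_monotone hneg
    have hfrac : ENNReal.ofReal (1/(r^2 * L^α)) ≤
        ENNReal.ofReal (1 / (x^2 * (-Real.log x)^α)) := by
      apply ENNReal.ofReal_le_ofReal
      apply one_div_le_one_div_of_le
      · exact mul_pos (pow_pos hxpos 2) (Real.rpow_pos_of_pos hlx α)
      · have hneglog : -Real.log x ≤ L := by
          rw [hLdef]
          linarith [Real.log_le_log hr2 hxl.le]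
        exact mul_le_mul (pow_le_pow_left₀ (norm_nonneg _) hxr.le 2)
          (Real.rpow_le_rpow hlx.le hneglog hα0.le)
          (Real.rpow_nonneg hlx.le α) (by positivity)
    calc ENNReal.ofReal ((2*r)^(-a) * (1/(r^2 * L^α)))
        = ENNReal.ofReal ((2*r)^(-a)) * ENNReal.ofReal (1/(r^2 * L^α)) :=
          ENNReal.ofReal_mul (by positivity)
      _ ≤ _ := mul_le_mul' hexp hfrac
  -- measurability and volume of S
  have hSmeas : MeasurableSet S := by
    apply MeasurableSet.univ_pi
    intro i
    fin_cases i
    · show MeasurableSet (Metric.ball (0:ℂ) r \ Metric.closedBall 0 (r/2))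
      exact measurableSet_ball.diff measurableSet_closedBall
    · show MeasurableSet (Metric.closedBall (1/(k:ℂ)) ((r/2) ^ ((1:ℝ)/b)))
      exact measurableSet_closedBall
    · show MeasurableSet (Metric.closedBall (0:ℂ) (r ^ (a/lam)))
      exact measurableSet_closedBall
  have hpi : ((NNReal.pi : ℝ≥0) : ℝ≥0∞) = ENNReal.ofReal π := by
    rw [← NNReal.coe_real_pi, ENNReal.ofReal_coe_nnreal]
  have hmeasT0 : volume (T 0) = ENNReal.ofReal ((3/4) * r^2 * π) := by
    rw [hT0, measure_diff (Metric.closedBall_subset_ball (by linarith))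
      measurableSet_closedBall.nullMeasurableSet measure_closedBall_lt_top.ne,
      Complex.volume_ball, Complex.volume_closedBall,
      ← ENNReal.ofReal_pow hr0.le, ← ENNReal.ofReal_pow hr2.le, hpi,
      ← ENNReal.ofReal_mul (by positivity), ← ENNReal.ofReal_mul (by positivity),
      ← ENNReal.ofReal_sub _ (by positivity)]
    congr 1
    ring
  have hmeasT1 : volume (T 1) = ENNReal.ofReal (((r/2) ^ ((1:ℝ)/b))^2 * π) := by
    rw [hT1, Complex.volume_closedBall, hpi, ← ENNReal.ofReal_pow (by positivity),
      ← ENNReal.ofReal_mul (by positivity)]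
  have hmeasT2 : volume (T 2) = ENNReal.ofReal ((r ^ (a/lam))^2 * π) := by
    rw [hT2, Complex.volume_closedBall, hpi, ← ENNReal.ofReal_pow (by positivity),
      ← ENNReal.ofReal_mul (by positivity)]
  have hvolS : volume S = ENNReal.ofReal ((3/4) * r^2 * π) *
      ENNReal.ofReal (((r/2) ^ ((1:ℝ)/b))^2 * π) * ENNReal.ofReal ((r ^ (a/lam))^2 * π) := by
    rw [hSdef, volume_pi_pi, Fin.prod_univ_three, hmeasT0, hmeasT1, hmeasT2]
  -- chain of integral bounds
  have hchain : ENNReal.ofReal ((2*r)^(-a) * (1/(r^2 * L^α))) * volume S ≤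
      ∫⁻ z in Metric.ball (pk k) ε, EReal.exp (-(phi3 lam z)) *
        ENNReal.ofReal (1 / (‖z 0‖ ^ 2 * (-Real.log (‖z 0‖)) ^ α)) := by
    calc ENNReal.ofReal ((2*r)^(-a) * (1/(r^2 * L^α))) * volume S
        = ∫⁻ _ in S, ENNReal.ofReal ((2*r)^(-a) * (1/(r^2 * L^α))) :=
          (setLIntegral_const S _).symm
      _ ≤ ∫⁻ z in S, EReal.exp (-(phi3 lam z)) *
            ENNReal.ofReal (1 / (‖z 0‖ ^ 2 * (-Real.log (‖z 0‖)) ^ α)) := by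
          apply lintegral_mono_ae
          filter_upwards [ae_restrict_mem hSmeas] with z hz using hpoint z hz
      _ ≤ _ := lintegral_mono_set hSball
  refine le_trans ?_ hchain
  rw [hvolS, ← ENNReal.ofReal_mul (by positivity), ← ENNReal.ofReal_mul (by positivity),
    ← ENNReal.ofReal_mul (by positivity)]
  apply ENNReal.ofReal_le_ofReal
  -- the real inequality
  set C := (3/4) * π^3 * (2:ℝ)^(-a) * (2:ℝ)^(-(2/b)) with hCdef
  have hπ := Real.pi_pos
  have hCpos : 0 < C := by rw [hCdef]; positivity
  have e1 : ((2*r:ℝ))^(-a) = (2:ℝ)^(-a) * r^(-a) := Real.mul_rpow (by norm_num) hr0.le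
  have e2 : (((r/2:ℝ)) ^ ((1:ℝ)/b))^2 = r^(2/b) * (2:ℝ)^(-(2/b)) := by
    rw [← Real.rpow_natCast ((r/2:ℝ) ^ ((1:ℝ)/b)) 2, ← Real.rpow_mul hr2.le,
      show (1:ℝ)/b * ((2:ℕ):ℝ) = 2/b by push_cast; ring,
      div_eq_mul_inv r 2, Real.mul_rpow hr0.le (by norm_num),
      Real.inv_rpow (by norm_num), ← Real.rpow_neg (by norm_num)]
  have e3 : ((r^(a/lam) : ℝ))^2 = r^(2*a/lam) := by
    rw [← Real.rpow_natCast (r^(a/lam)) 2, ← Real.rpow_mul hr0.le]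
    congr 1
    push_cast
    ring
  have e4 : r^(-a) * r^(2/b) * r^(2*a/lam) = r^(-γ) := by
    rw [← Real.rpow_add hr0, ← Real.rpow_add hr0]
    congr 1
    rw [hgdef]
    show -a + 2/b + 2*a/lam = -(gam k lam)
    rw [gam, ← hadef, ← hbdef]
    ring
  have hLb : L ^ α ≤ (2*α/γ)^α * ((2:ℝ)^(γ/2) * r^(-(γ/2))) := by
    have hs : (0:ℝ) < γ/(2*α) := by positivity
    have hlog : L = Real.log (2/r) := by
      rw [hLdef, ← Real.log_inv, inv_div]
    have h5 : L ≤ (2/r)^(γ/(2*α)) * (2*α/γ) := by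
      rw [hlog]
      calc Real.log (2/r) ≤ (2/r)^(γ/(2*α)) / (γ/(2*α)) :=
            Real.log_le_rpow_div (by positivity) hs
        _ = (2/r)^(γ/(2*α)) * (2*α/γ) := by rw [div_eq_mul_inv, inv_div]
    calc L^α ≤ ((2/r)^(γ/(2*α)) * (2*α/γ))^α :=
          Real.rpow_le_rpow hLpos.le h5 hα0.le
      _ = (2*α/γ)^α * ((2:ℝ)^(γ/2) * r^(-(γ/2))) := by
          rw [Real.mul_rpow (by positivity) (by positivity),
            ← Real.rpow_mul (by positivity : (0:ℝ) ≤ 2/r),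
            show γ/(2*α) * α = γ/2 by field_simp,
            div_eq_mul_inv (2:ℝ) r, Real.mul_rpow (by norm_num) (by positivity),
            Real.inv_rpow hr0.le, ← Real.rpow_neg hr0.le]
          ring
  have hLinv : ((2*α/γ)^α)⁻¹ * ((2:ℝ)^(-(γ/2)) * r^(γ/2)) ≤ (L^α)⁻¹ := by
    have h6 : ((2*α/γ)^α * ((2:ℝ)^(γ/2) * r^(-(γ/2))))⁻¹ ≤ (L^α)⁻¹ :=
      inv_anti₀ hLα hLb
    calc ((2*α/γ)^α)⁻¹ * ((2:ℝ)^(-(γ/2)) * r^(γ/2))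
        = ((2*α/γ)^α * ((2:ℝ)^(γ/2) * r^(-(γ/2))))⁻¹ := by
          rw [mul_inv, mul_inv, ← Real.rpow_neg (by norm_num : (0:ℝ) ≤ 2),
            ← Real.rpow_neg hr0.le, neg_neg]
      _ ≤ (L^α)⁻¹ := h6
  have hrr : r^(-γ) * r^(γ/2) = r^(-(γ/2)) := by
    rw [← Real.rpow_add hr0]
    congr 1
    ring
  have hKeq : Kc k lam α = C * (((2*α/γ)^α)⁻¹ * (2:ℝ)^(-(γ/2))) := by
    rw [Kc, hCdef, ← hadef, ← hbdef, ← hgdef]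
    ring
  calc Kc k lam α * r^(-(γ/2))
      = C * (r^(-a) * r^(2/b) * r^(2*a/lam)) * (((2*α/γ)^α)⁻¹ * ((2:ℝ)^(-(γ/2)) * r^(γ/2))) := by
        rw [e4, hKeq, ← hrr]
        ring
    _ ≤ C * (r^(-a) * r^(2/b) * r^(2*a/lam)) * (L^α)⁻¹ :=
        mul_le_mul_of_nonneg_left hLinv (by positivity)
    _ = (2*r)^(-a) * (1/(r^2 * L^α)) * ((3/4) * r^2 * π * (((r/2) ^ ((1:ℝ)/b))^2 * π) *
          ((r ^ (a/lam))^2 * π)) := by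
        rw [e1, e2, e3, hCdef]
        field_simp

/-- For `λ > 6`, every `k ≥ 2` and every `α > 1`, the function
`e^{-φ}/(|z₁|²(-log|z₁|)^α)` is not Lebesgue-integrable on any neighborhood of
`p_k = (0, 1/k, 0)`. -/
theorem adjoint_ideal_stmt7 (lam : ℝ) (hlam : 6 < lam) (k : ℕ) (hk : 2 ≤ k)
    (α : ℝ) (hα : 1 < α) (V : Set (Fin 3 → ℂ)) (hV : V ∈ nhds (pk k)) :
    ∫⁻ z in V, EReal.exp (-(phi3 lam z)) *
      ENNReal.ofReal (1 / (‖z 0‖ ^ 2 * (-Real.log (‖z 0‖)) ^ α)) = ⊤ := by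
  have hγ : 0 < gam k lam := gam_pos k hlam
  have hK : 0 < Kc k lam α := Kc_pos k hlam hα
  set γ := gam k lam with hgdef
  obtain ⟨ε₀, hε₀, hball⟩ := Metric.mem_nhds_iff.1 hV
  set ε := min ε₀ (1/4) with hε
  have hεpos : 0 < ε := lt_min hε₀ (by norm_num)
  have hε14 : ε ≤ 1/4 := min_le_right _ _
  have hballV : Metric.ball (pk k) ε ⊆ V :=
    subset_trans (Metric.ball_subset_ball (min_le_left _ _)) hball
  apply ENNReal.eq_top_of_forall_nnreal_le
  intro M
  set B := (1 + (M:ℝ)) / Kc k lam α with hB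
  have hM0 : (0:ℝ) ≤ (M:ℝ) := M.coe_nonneg
  have hBpos : 0 < B := by positivity
  set r := min (min (1/8 : ℝ) (ε ^ be k)) (min (ε ^ (lam / al k) / 2) (B ^ (-(2/γ)))) with hr
  have hεb : 0 < ε ^ be k := Real.rpow_pos_of_pos hεpos _
  have hεl : 0 < ε ^ (lam / al k) := Real.rpow_pos_of_pos hεpos _
  have hr0 : 0 < r :=
    lt_min (lt_min (by norm_num) hεb)
      (lt_min (by linarith) (Real.rpow_pos_of_pos hBpos _))
  have hr18 : r ≤ 1/8 := le_trans (min_le_left _ _) (min_le_left _ _)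
  have hrεb : r/2 < ε ^ be k := by
    have h : r ≤ ε ^ be k := le_trans (min_le_left _ _) (min_le_right _ _)
    linarith [h]
  have hrεl : r < ε ^ (lam / al k) := by
    have h : r ≤ ε ^ (lam / al k) / 2 := le_trans (min_le_right _ _) (min_le_left _ _)
    linarith [h]
  have hrB : r ≤ B ^ (-(2/γ)) :=
    le_trans (min_le_right _ _) (min_le_right _ _)
  have hkey := key_est lam hlam k hk α hα ε hεpos hε14 r hr0 hr18 hrεb hrεl
  have hMle : (M:ℝ) ≤ Kc k lam α * r ^ (-(γ/2)) := by
    have h1 : (B ^ (-(2/γ)) : ℝ) ^ (-(γ/2)) ≤ r ^ (-(γ/2)) :=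
      Real.rpow_le_rpow_of_nonpos hr0 hrB (by linarith : -(γ/2) ≤ 0)
    have h2 : ((B ^ (-(2/γ)) : ℝ)) ^ (-(γ/2)) = B := by
      rw [← Real.rpow_mul hBpos.le,
        show (-(2/γ)) * (-(γ/2)) = 1 by field_simp, Real.rpow_one]
    have h3 : B ≤ r ^ (-(γ/2)) := h2 ▸ h1
    have h4 : Kc k lam α * B ≤ Kc k lam α * r ^ (-(γ/2)) :=
      mul_le_mul_of_nonneg_left h3 hK.le
    have h5 : Kc k lam α * B = 1 + (M:ℝ) := by
      rw [hB, mul_comm, div_mul_cancel₀ _ hK.ne']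
    linarith
  calc (M : ℝ≥0∞) = ENNReal.ofReal (M:ℝ) := ENNReal.ofReal_coe_nnreal.symm
    _ ≤ ENNReal.ofReal (Kc k lam α * r ^ (-(γ/2))) := ENNReal.ofReal_le_ofReal hMle
    _ ≤ ∫⁻ z in Metric.ball (pk k) ε, EReal.exp (-(phi3 lam z)) *
          ENNReal.ofReal (1 / (‖z 0‖ ^ 2 *
            (-Real.log (‖z 0‖)) ^ α)) := hkey
    _ ≤ _ := lintegral_mono_set hballV
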